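/- arXiv:2003.14342 — 2 statements merged into one kernel-verified Lean document; each statement's English description precedes it below -/
import Mathlib

section
/- Let z = p/2^n be a fusible number with p odd, and suppose z is a successor in the well-order on F. Then the predecessor of z (the largest fusible number less than z) equals (p−1)/2^n. -/
/-- The set of fusible numbers. -/
inductive Fusible : ℝ → Prop
  | zero : Fusible 0
  | fuse (x y : ℝ) : Fusible x → Fusible y → |y - x| < 1 → Fusible ((x + y + 1) / 2)

/-- Full binary trees, used as representations of fusible numbers. -/
inductive RepTree where
  | leaf : RepTree
  | node (l r : RepTree) : RepTree

/-- The value of a representation: leaves are `0`, internal nodes fuse their children. -/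
noncomputable def RepTree.val : RepTree → ℝ
  | .leaf => 0
  | .node l r => (l.val + r.val + 1) / 2

/-- Validity of a representation: at every internal node, the children differ by less than 1. -/
def RepTree.Valid : RepTree → Prop
  | .leaf => True
  | .node l r => l.Valid ∧ r.Valid ∧ |r.val - l.val| < 1

/-- The height of a representation: length of the longest root-to-leaf path. -/
def RepTree.height : RepTree → ℕ
  | .leaf => 0
  | .node l r => max l.height r.height + 1

/-- `IsExp r n` means that the dyadic rational `r` has exponent `n`, i.e. `n` is the least
natural number such that `r = p / 2 ^ n` for an integer `p` (so that `p` is odd when `n ≥ 1`). -/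
def IsExp (r : ℝ) (n : ℕ) : Prop :=
  (∃ p : ℤ, r = (p : ℝ) / 2 ^ n) ∧ ∀ m : ℕ, m < n → ¬ ∃ p : ℤ, r = (p : ℝ) / 2 ^ m

/-- `HMaxIs z n` means that the maximum height over all representations of `z` is `n`. -/
def HMaxIs (z : ℝ) (n : ℕ) : Prop :=
  (∃ T : RepTree, T.Valid ∧ T.val = z ∧ T.height = n) ∧
  ∀ T : RepTree, T.Valid → T.val = z → T.height ≤ n

/-- `z` is a limit fusible number: it is the supremum of the smaller fusible numbers. -/
def IsLimitFusible (z : ℝ) : Prop :=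
  IsLUB {w : ℝ | Fusible w ∧ w < z} z

lemma val_nonneg : ∀ T : RepTree, 0 ≤ T.val := by
  intro T
  induction T with
  | leaf => simp [RepTree.val]
  | node l r ihl ihr => simp only [RepTree.val]; linarith

lemma grid : ∀ (T : RepTree) (H : ℕ), T.height ≤ H → ∃ k : ℤ, T.val = (k : ℝ) / 2 ^ H := by
  intro T
  induction T with
  | leaf => intro H _; exact ⟨0, by simp [RepTree.val]⟩
  | node l r ihl ihr =>
    intro H hH
    simp only [RepTree.height] at hH
    obtain ⟨H', rfl⟩ : ∃ H', H = H' + 1 := ⟨H - 1, by omega⟩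
    obtain ⟨kl, hkl⟩ := ihl H' (by omega)
    obtain ⟨kr, hkr⟩ := ihr H' (by omega)
    refine ⟨kl + kr + 2 ^ H', ?_⟩
    simp only [RepTree.val, hkl, hkr]
    have h2 : (2:ℝ) ^ H' ≠ 0 := by positivity
    push_cast
    rw [pow_succ]
    field_simp

lemma fusible_of_tree : ∀ T : RepTree, T.Valid → Fusible T.val := by
  intro T
  induction T with
  | leaf => intro _; exact Fusible.zero
  | node l r ihl ihr =>
    intro hv
    obtain ⟨hl, hr, hd⟩ := hv
    exact Fusible.fuse _ _ (ihl hl) (ihr hr) hd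

lemma tree_of_fusible {z : ℝ} (h : Fusible z) : ∃ T : RepTree, T.Valid ∧ T.val = z := by
  induction h with
  | zero => exact ⟨.leaf, trivial, rfl⟩
  | fuse x y hx hy hd ihx ihy =>
    obtain ⟨Tx, hTxv, hTxval⟩ := ihx
    obtain ⟨Ty, hTyv, hTyval⟩ := ihy
    exact ⟨.node Tx Ty, ⟨hTxv, hTyv, by rw [hTxval, hTyval]; exact hd⟩,
      by simp [RepTree.val, hTxval, hTyval]⟩

lemma exists_exp (H : ℕ) (k : ℤ) :
    ∃ n ≤ H, ∃ q : ℤ, (k : ℝ) / 2 ^ H = (q : ℝ) / 2 ^ n ∧ (n = 0 ∨ Odd q) := by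
  induction H generalizing k with
  | zero => exact ⟨0, le_refl 0, k, rfl, Or.inl rfl⟩
  | succ H ih =>
    rcases Int.even_or_odd k with ⟨k', hk'⟩ | hodd
    · obtain ⟨n, hn, q, hq, hqo⟩ := ih k'
      refine ⟨n, by omega, q, ?_, hqo⟩
      rw [← hq, hk']
      have h2 : (2:ℝ) ^ H ≠ 0 := by positivity
      push_cast
      rw [pow_succ]
      field_simp
      ring
    · exact ⟨H + 1, le_refl _, k, rfl, Or.inr hodd⟩

lemma exp_unique {a b : ℕ} {q r : ℤ} (h : (q : ℝ) / 2 ^ a = (r : ℝ) / 2 ^ b)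
    (hq : a = 0 ∨ Odd q) (hr : b = 0 ∨ Odd r) : a = b ∧ q = r := by
  have h2a : (2:ℝ) ^ a ≠ 0 := by positivity
  have h2b : (2:ℝ) ^ b ≠ 0 := by positivity
  have hZ : q * 2 ^ b = r * 2 ^ a := by
    have : (q:ℝ) * 2 ^ b = (r:ℝ) * 2 ^ a := by
      field_simp at h; linarith
    exact_mod_cast this
  have hab : a = b := by
    by_contra hne
    rcases Nat.lt_or_ge a b with hlt | hge
    · obtain ⟨c, rfl⟩ : ∃ c, b = a + c + 1 := ⟨b - a - 1, by omega⟩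
      have hrodd : Odd r := hr.resolve_left (by omega)
      have : q * 2 ^ (a + c + 1) = r * 2 ^ a := hZ
      have hr2 : r = q * 2 ^ (c + 1) := by
        have h2 : (2:ℤ) ^ a ≠ 0 := by positivity
        have : q * 2 ^ (c+1) * 2 ^ a = r * 2 ^ a := by rw [← this]; ring
        exact (mul_right_cancel₀ h2 this).symm
      have : Even r := ⟨q * 2 ^ c, by rw [hr2, pow_succ]; ring⟩
      exact (Int.not_odd_iff_even.mpr this) hrodd
    · have hlt : b < a := by omega
      obtain ⟨c, rfl⟩ : ∃ c, a = b + c + 1 := ⟨a - b - 1, by omega⟩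
      have hqodd : Odd q := hq.resolve_left (by omega)
      have hq2 : q = r * 2 ^ (c + 1) := by
        have h2 : (2:ℤ) ^ b ≠ 0 := by positivity
        have : r * 2 ^ (c+1) * 2 ^ b = q * 2 ^ b := by rw [hZ]; ring
        exact (mul_right_cancel₀ h2 this).symm
      have : Even q := ⟨r * 2 ^ c, by rw [hq2, pow_succ]; ring⟩
      exact (Int.not_odd_iff_even.mpr this) hqodd
  subst hab
  refine ⟨rfl, ?_⟩
  have h2 : (2:ℤ) ^ a ≠ 0 := by positivity
  exact mul_right_cancel₀ h2 hZ

lemma half_fusible : Fusible (1/2 : ℝ) := by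
  have h := Fusible.fuse 0 0 Fusible.zero Fusible.zero (by norm_num)
  norm_num at h
  exact h

lemma gap_above : ∀ T : RepTree, T.Valid →
    ∃ u : ℝ, Fusible u ∧ T.val < u ∧ u < T.val + 1 / 2 ^ T.height := by
  intro T
  induction T with
  | leaf =>
    intro _
    exact ⟨1/2, half_fusible, by norm_num [RepTree.val], by norm_num [RepTree.val, RepTree.height]⟩
  | node l r ihl ihr =>
    intro hv
    obtain ⟨hlv, hrv, hd⟩ := hv
    rcases le_or_gt r.height l.height with hle | hlt
    · obtain ⟨kl, hkl⟩ := grid l l.height le_rfl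
      obtain ⟨kr, hkr⟩ := grid r l.height hle
      have h2 : (0:ℝ) < 2 ^ l.height := by positivity
      have hcancel : (1:ℝ) / 2 ^ l.height * 2 ^ l.height = 1 := by field_simp
      have hval : r.val - l.val = ((kr - kl : ℤ) : ℝ) / 2 ^ l.height := by
        rw [hkl, hkr]; push_cast; ring
      have h1 : -1 < r.val - l.val := by
        have := neg_abs_le (r.val - l.val); linarith
      have hint : -(2:ℤ) ^ l.height < kr - kl := by
        have h1' : (-1 : ℝ) < ((kr - kl : ℤ) : ℝ) / 2 ^ l.height := by rw [← hval]; exact h1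
        rw [lt_div_iff₀ h2] at h1'
        have : (-(2:ℝ) ^ l.height) < ((kr - kl : ℤ) : ℝ) := by linarith
        exact_mod_cast this
      have hint2 : 1 - (2:ℤ) ^ l.height ≤ kr - kl := by omega
      have hR : ((1:ℝ) - 2 ^ l.height) ≤ ((kr - kl : ℤ) : ℝ) := by exact_mod_cast hint2
      have hlow : -(1:ℝ) + 1 / 2 ^ l.height ≤ r.val - l.val := by
        rw [hval, le_div_iff₀ h2]
        have expand : (-(1:ℝ) + 1 / 2 ^ l.height) * 2 ^ l.height
            = -(2:ℝ) ^ l.height + 1 := by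
          rw [add_mul, neg_one_mul, hcancel]
        rw [expand]; linarith
      obtain ⟨ux, hux, hx1, hx2⟩ := ihl hlv
      refine ⟨(ux + r.val + 1) / 2, ?_, ?_, ?_⟩
      · refine Fusible.fuse _ _ hux (fusible_of_tree r hrv) ?_
        rw [abs_lt]
        refine ⟨by linarith, ?_⟩
        have : r.val - l.val < 1 := by have := le_abs_self (r.val - l.val); linarith
        linarith
      · simp only [RepTree.val]; linarith
      · simp only [RepTree.val, RepTree.height]
        have hmax : max l.height r.height = l.height := by omega
        rw [hmax, pow_succ]
        have : (1:ℝ) / (2 ^ l.height * 2) = (1 / 2 ^ l.height) / 2 := by ring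
        rw [this]
        linarith
    · obtain ⟨kl, hkl⟩ := grid l r.height (le_of_lt hlt)
      obtain ⟨kr, hkr⟩ := grid r r.height le_rfl
      have h2 : (0:ℝ) < 2 ^ r.height := by positivity
      have hcancel : (1:ℝ) / 2 ^ r.height * 2 ^ r.height = 1 := by field_simp
      have hval : r.val - l.val = ((kr - kl : ℤ) : ℝ) / 2 ^ r.height := by
        rw [hkl, hkr]; push_cast; ring
      have h1 : r.val - l.val < 1 := by
        have := le_abs_self (r.val - l.val); linarith
      have hint : kr - kl < (2:ℤ) ^ r.height := by
        have h1' : ((kr - kl : ℤ) : ℝ) / 2 ^ r.height < 1 := by rw [← hval]; exact h1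
        rw [div_lt_iff₀ h2] at h1'
        have : ((kr - kl : ℤ) : ℝ) < (2:ℝ) ^ r.height := by linarith
        exact_mod_cast this
      have hint2 : kr - kl ≤ (2:ℤ) ^ r.height - 1 := by omega
      have hR : ((kr - kl : ℤ) : ℝ) ≤ (2:ℝ) ^ r.height - 1 := by exact_mod_cast hint2
      have hup : r.val - l.val ≤ 1 - 1 / 2 ^ r.height := by
        rw [hval, div_le_iff₀ h2]
        have expand : ((1:ℝ) - 1 / 2 ^ r.height) * 2 ^ r.height
            = (2:ℝ) ^ r.height - 1 := by
          rw [sub_mul, one_mul, hcancel]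
        rw [expand]; linarith
      obtain ⟨uy, huy, hy1, hy2⟩ := ihr hrv
      refine ⟨(l.val + uy + 1) / 2, ?_, ?_, ?_⟩
      · refine Fusible.fuse _ _ (fusible_of_tree l hlv) huy ?_
        rw [abs_lt]
        constructor
        · have : -1 < r.val - l.val := by have := neg_abs_le (r.val - l.val); linarith
          linarith
        · linarith
      · simp only [RepTree.val]; linarith
      · simp only [RepTree.val, RepTree.height]
        have hmax : max l.height r.height = r.height := by omega
        rw [hmax, pow_succ]
        have : (1:ℝ) / (2 ^ r.height * 2) = (1 / 2 ^ r.height) / 2 := by ring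
        rw [this]
        linarith

lemma step (g : ℕ)
    (SubIH : ∀ (T : RepTree) (n : ℕ) (p : ℤ), T.Valid → T.height ≤ g → Odd p →
      T.val = (p : ℝ) / 2 ^ n →
      ∃ T' : RepTree, T'.Valid ∧ T'.height ≤ g ∧ T'.val = T.val - 1 / 2 ^ n)
    (L R : RepTree) (hLv : L.Valid) (hRv : R.Valid) (hd : |R.val - L.val| < 1)
    (hLh : L.height ≤ g) (hRh : R.height ≤ g)
    (a b : ℕ) (q r : ℤ) (hx : L.val = (q : ℝ) / 2 ^ a) (hy : R.val = (r : ℝ) / 2 ^ b)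
    (hab : a < b) (hro : Odd r)
    (n : ℕ) (p : ℤ) (hp : Odd p) (hz : (L.val + R.val + 1) / 2 = (p : ℝ) / 2 ^ n) :
    ∃ T' : RepTree, T'.Valid ∧ T'.height ≤ g + 1 ∧
      T'.val = (L.val + R.val + 1) / 2 - 1 / 2 ^ n := by
  obtain ⟨c, rfl⟩ : ∃ c, b = a + (c + 1) := ⟨b - a - 1, by omega⟩
  set b := a + (c + 1) with hbdef
  have h2a : (2:ℝ) ^ a ≠ 0 := by positivity
  have h2b : (0:ℝ) < 2 ^ b := by positivity
  have hxb : L.val = ((q * 2 ^ (c + 1) : ℤ) : ℝ) / 2 ^ b := by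
    rw [hx, hbdef, pow_add]
    push_cast
    field_simp
    ring
  set N : ℤ := q * 2 ^ (c + 1) + r + 2 ^ b with hNdef
  have hzN : (L.val + R.val + 1) / 2 = ((N : ℤ) : ℝ) / 2 ^ (b + 1) := by
    rw [div_eq_div_iff (by norm_num) (by positivity : (0:ℝ) < 2 ^ (b+1)).ne']
    rw [hxb, hy, hNdef]
    push_cast
    rw [pow_succ]
    field_simp
    ring
  have hb1 : 1 ≤ b := by omega
  have hNodd : Odd N := by
    obtain ⟨t, ht⟩ := hro
    obtain ⟨b', hb'⟩ : ∃ b', b = b' + 1 := ⟨b - 1, by omega⟩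
    refine ⟨q * 2 ^ c + t + 2 ^ b', ?_⟩
    rw [hNdef, ht, hb', pow_succ, pow_succ]
    ring
  have huniq : n = b + 1 ∧ p = N :=
    exp_unique (by rw [← hz, hzN]) (Or.inr hp) (Or.inr hNodd)
  obtain ⟨rfl, rfl⟩ := huniq
  set D : ℤ := r - q * 2 ^ (c + 1) with hDdef
  have hyx : R.val - L.val = ((D : ℤ) : ℝ) / 2 ^ b := by
    rw [hxb, hy, hDdef]; push_cast; ring
  have hDlow : -(2:ℤ) ^ b < D := by
    have h1 : -1 < R.val - L.val := by have := neg_abs_le (R.val - L.val); linarith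
    have h1' : (-1 : ℝ) < ((D : ℤ) : ℝ) / 2 ^ b := by rw [← hyx]; exact h1
    rw [lt_div_iff₀ h2b] at h1'
    have : (-(2:ℝ) ^ b) < ((D : ℤ) : ℝ) := by linarith
    exact_mod_cast this
  have hDhigh : D < (2:ℤ) ^ b := by
    have h1 : R.val - L.val < 1 := by have := le_abs_self (R.val - L.val); linarith
    have h1' : ((D : ℤ) : ℝ) / 2 ^ b < 1 := by rw [← hyx]; exact h1
    rw [div_lt_iff₀ h2b] at h1'
    have : ((D : ℤ) : ℝ) < (2:ℝ) ^ b := by linarith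
    exact_mod_cast this
  have hpow : (1:ℝ) / 2 ^ (b + 1) = (1 / 2 ^ b) / 2 := by rw [pow_succ]; ring
  by_cases hD : D = 1 - 2 ^ b
  · -- answer is L itself
    refine ⟨L, hLv, by omega, ?_⟩
    have hRLv : R.val = L.val + ((1:ℝ) - 2 ^ b) / 2 ^ b := by
      have : ((D : ℤ) : ℝ) = (1:ℝ) - 2 ^ b := by rw [hD]; push_cast; ring
      rw [this] at hyx
      linarith
    have hkey : ((1:ℝ) - 2 ^ b) / 2 ^ b = 1 / 2 ^ b - 1 := by
      rw [sub_div, div_self h2b.ne', one_div]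
    rw [hRLv, hkey, hpow]
    ring
  · have hD2 : 2 - 2 ^ b ≤ D := by omega
    obtain ⟨R', hR'v, hR'h, hR'val⟩ := SubIH R b r hRv hRh hro hy
    have hval' : R'.val - L.val = ((D - 1 : ℤ) : ℝ) / 2 ^ b := by
      rw [hR'val]
      push_cast
      rw [sub_div]
      have h1 : (1:ℝ) / 2 ^ b = 1 / 2 ^ b := rfl
      linarith [hyx]
    refine ⟨.node L R', ⟨hLv, hR'v, ?_⟩, ?_, ?_⟩
    · rw [show R'.val - L.val = ((D - 1 : ℤ) : ℝ) / 2 ^ b from hval', abs_lt]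
      constructor
      · rw [lt_div_iff₀ h2b]
        have : (-(2:ℝ) ^ b) < ((D - 1 : ℤ) : ℝ) := by
          have : -(2:ℤ) ^ b < D - 1 := by omega
          exact_mod_cast this
        linarith
      · rw [div_lt_iff₀ h2b]
        have : ((D - 1 : ℤ) : ℝ) < (2:ℝ) ^ b := by
          have : D - 1 < (2:ℤ) ^ b := by omega
          exact_mod_cast this
        linarith
    · simp only [RepTree.height]; omega
    · simp only [RepTree.val, hR'val, hpow]
      ring

set_option maxHeartbeats 1000000 in
lemma sub_ulp : ∀ (h : ℕ), ∀ (μ : ℕ), ∀ (T : RepTree) (n : ℕ) (p : ℤ), T.Valid → T.height ≤ h →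
    Odd p → T.val = (p : ℝ) / 2 ^ n → T.val * 2 ^ h ≤ (μ : ℝ) →
    ∃ T' : RepTree, T'.Valid ∧ T'.height ≤ h ∧ T'.val = T.val - 1 / 2 ^ n := by
  intro h
  induction h using Nat.strong_induction_on with
  | _ h IHh =>
  intro μ
  induction μ using Nat.strong_induction_on with
  | _ μ IHμ =>
  intro T n p hv hht hp hz hμ
  match T with
  | .leaf =>
    exfalso
    have h0 : (0:ℝ) = (p : ℝ) / 2 ^ n := hz
    have h2n : (2:ℝ) ^ n ≠ 0 := by positivity
    have : (p : ℝ) = 0 := by field_simp at h0; linarith [h0]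
    have : p = 0 := by exact_mod_cast this
    subst this
    exact (Int.not_odd_iff_even.mpr (Even.zero)) hp
  | .node L R =>
  have hht' : max L.height R.height + 1 ≤ h := hht
  obtain ⟨g, rfl⟩ : ∃ g, h = g + 1 := ⟨h - 1, by omega⟩
  have hLh : L.height ≤ g := by omega
  have hRh : R.height ≤ g := by omega
  obtain ⟨hLv, hRv, hd⟩ := hv
  have hzval : (RepTree.node L R).val = (L.val + R.val + 1) / 2 := rfl
  have hzLR : (L.val + R.val + 1) / 2 = (p : ℝ) / 2 ^ n := hzval.symm.trans hz
  -- restricted induction hypothesis for height ≤ g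
  have SubIH : ∀ (T₀ : RepTree) (n₀ : ℕ) (p₀ : ℤ), T₀.Valid → T₀.height ≤ g → Odd p₀ →
      T₀.val = (p₀ : ℝ) / 2 ^ n₀ →
      ∃ T' : RepTree, T'.Valid ∧ T'.height ≤ g ∧ T'.val = T₀.val - 1 / 2 ^ n₀ := by
    intro T₀ n₀ p₀ v₀ h₀ o₀ z₀
    obtain ⟨k, hk⟩ := grid T₀ g h₀
    have h2g : (0:ℝ) < 2 ^ g := by positivity
    have hk0 : 0 ≤ k := by
      have hv0 := val_nonneg T₀
      rw [hk] at hv0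
      have : (0:ℝ) ≤ (k:ℝ) := by
        by_contra hneg
        push_neg at hneg
        have : (k:ℝ) / 2 ^ g < 0 := div_neg_of_neg_of_pos hneg h2g
        linarith
      exact_mod_cast this
    refine IHh g (by omega) k.toNat T₀ n₀ p₀ v₀ h₀ o₀ z₀ ?_
    rw [hk, div_mul_cancel₀ _ h2g.ne']
    exact_mod_cast (Int.self_le_toNat k)
  -- canonical exponents of the children
  obtain ⟨kl, hkl⟩ := grid L g hLh
  obtain ⟨kr, hkr⟩ := grid R g hRh
  obtain ⟨a, hag, q, hq, hqo⟩ := exists_exp g kl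
  obtain ⟨b, hbg, r, hr, hro⟩ := exists_exp g kr
  have hx : L.val = (q : ℝ) / 2 ^ a := by rw [hkl, hq]
  have hy : R.val = (r : ℝ) / 2 ^ b := by rw [hkr, hr]
  rcases lt_trichotomy a b with hab | hab | hab
  · -- a < b
    have hrodd : Odd r := hro.resolve_left (by omega)
    obtain ⟨T', hT'⟩ := step g SubIH L R hLv hRv hd hLh hRh a b q r hx hy hab hrodd n p hp hzLR
    exact ⟨T', hT'.1, hT'.2.1, by rw [hzval]; exact hT'.2.2⟩
  · -- a = b
    subst hab
    by_cases ha0 : a = 0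
    · -- both children are integers, hence equal
      subst ha0
      have hqr : q = r := by
        have h1 : ((r - q : ℤ) : ℝ) = R.val - L.val := by
          rw [hx, hy]; push_cast; norm_num
        have h2 : |((r - q : ℤ) : ℝ)| < 1 := by rw [h1]; exact hd
        have h3 : |r - q| < 1 := by exact_mod_cast h2
        rw [abs_lt] at h3
        omega
      subst hqr
      have hzq : (L.val + R.val + 1) / 2 = ((2 * q + 1 : ℤ) : ℝ) / 2 ^ 1 := by
        rw [hx, hy]; push_cast; norm_num; ring
      have huniq : n = 1 ∧ p = 2 * q + 1 :=
        exp_unique (by rw [← hzLR, hzq]) (Or.inr hp) (Or.inr ⟨q, by ring⟩)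
      obtain ⟨rfl, rfl⟩ := huniq
      refine ⟨L, hLv, by omega, ?_⟩
      rw [hzval, hx, hy]
      norm_num
      ring
    · -- a = b ≥ 1
      have ha1 : 1 ≤ a := by omega
      have hqodd : Odd q := hqo.resolve_left ha0
      have hrodd : Odd r := hro.resolve_left ha0
      have h2a : (0:ℝ) < 2 ^ a := by positivity
      obtain ⟨L', hL'v, hL'h, hL'val⟩ := SubIH L a q hLv hLh hqodd hx
      obtain ⟨R', hR'v, hR'h, hR'val⟩ := SubIH R a r hRv hRh hrodd hy
      -- n ≤ a
      obtain ⟨i, hi⟩ := hqodd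
      obtain ⟨j, hj⟩ := hrodd
      have hqr2 : q + r = 2 * (i + j + 1) := by rw [hi, hj]; ring
      obtain ⟨a', ha'⟩ : ∃ a', a = a' + 1 := ⟨a - 1, by omega⟩
      have hzE : (L.val + R.val + 1) / 2 = ((i + j + 1 + 2 ^ a' : ℤ) : ℝ) / 2 ^ a := by
        rw [div_eq_div_iff (by norm_num) h2a.ne']
        rw [hx, hy]
        push_cast
        have hqrR : (q:ℝ) + r = 2 * ((i:ℝ) + j + 1) := by exact_mod_cast hqr2
        rw [ha', pow_succ]
        field_simp
        nlinarith [hqrR]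
      have hna : n ≤ a := by
        by_contra hgt
        push_neg at hgt
        have hcross : (p : ℝ) * 2 ^ a = ((i + j + 1 + 2 ^ a' : ℤ) : ℝ) * 2 ^ n := by
          have h5 := hzLR.symm.trans hzE
          rw [div_eq_div_iff (by positivity : (0:ℝ) < 2^n).ne' h2a.ne'] at h5
          linarith [h5]
        have hcrossZ : p * 2 ^ a = (i + j + 1 + 2 ^ a') * 2 ^ n := by exact_mod_cast hcross
        obtain ⟨d, hdd⟩ : ∃ d, n = a + (d + 1) := ⟨n - a - 1, by omega⟩
        have h6 : p * 2 ^ a = (i + j + 1 + 2 ^ a') * 2 ^ (d + 1) * 2 ^ a := by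
          rw [hcrossZ, hdd, pow_add]; ring
        have hpe : p = (i + j + 1 + 2 ^ a') * 2 ^ (d + 1) := by
          have h2 : (2:ℤ) ^ a ≠ 0 := by positivity
          exact mul_right_cancel₀ h2 h6
        have : Even p := ⟨(i + j + 1 + 2 ^ a') * 2 ^ d, by rw [hpe, pow_succ]; ring⟩
        exact (Int.not_odd_iff_even.mpr this) hp
      -- T₁ = node L' R' has value z - 1/2^a
      have hT₁val : (RepTree.node L' R').val = (L.val + R.val + 1) / 2 - 1 / 2 ^ a := by
        simp only [RepTree.val, hL'val, hR'val]; ring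
      have hT₁v : (RepTree.node L' R').Valid := by
        refine ⟨hL'v, hR'v, ?_⟩
        rw [hL'val, hR'val]
        have : R.val - 1 / 2 ^ a - (L.val - 1 / 2 ^ a) = R.val - L.val := by ring
        rw [this]; exact hd
      have hT₁h : (RepTree.node L' R').height ≤ g + 1 := by
        simp only [RepTree.height]; omega
      -- chain down from exponent a to exponent n
      have chain : ∀ j : ℕ, n + j ≤ a → ∃ T' : RepTree, T'.Valid ∧ T'.height ≤ g + 1 ∧
          T'.val = (L.val + R.val + 1) / 2 - 1 / 2 ^ (a - j) := by
        intro j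
        induction j with
        | zero =>
          intro _
          exact ⟨.node L' R', hT₁v, hT₁h, by rw [hT₁val]; norm_num⟩
        | succ j ihj =>
          intro hja
          obtain ⟨Tj, hTjv, hTjh, hTjval⟩ := ihj (by omega)
          obtain ⟨ce, hce⟩ : ∃ ce, a - j = n + (ce + 1) := ⟨a - j - n - 1, by omega⟩
          have hpjodd : Odd (p * 2 ^ (ce + 1) - 1) :=
            ⟨p * 2 ^ ce - 1, by rw [pow_succ]; ring⟩
          have hTjz : Tj.val = ((p * 2 ^ (ce + 1) - 1 : ℤ) : ℝ) / 2 ^ (a - j) := by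
            rw [hTjval, hzLR, hce]
            push_cast
            rw [pow_add]
            have h2n : (0:ℝ) < 2 ^ n := by positivity
            have h2c : (0:ℝ) < 2 ^ (ce + 1) := by positivity
            field_simp
          -- the μ-measure decreases
          obtain ⟨m, hm⟩ := grid Tj (g + 1) hTjh
          have h2g1 : (0:ℝ) < 2 ^ (g + 1) := by positivity
          have hmreal : (m : ℝ) = Tj.val * 2 ^ (g + 1) := by
            rw [hm, div_mul_cancel₀ _ h2g1.ne']
          have hm0 : 0 ≤ m := by
            have hv0 := val_nonneg Tj
            have : (0:ℝ) ≤ (m:ℝ) := by rw [hmreal]; positivity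
            exact_mod_cast this
          have hlt : Tj.val < (RepTree.node L R).val := by
            rw [hTjval, hzval]
            have : (0:ℝ) < 1 / 2 ^ (a - j) := by positivity
            linarith
          have hmullt := mul_lt_mul_of_pos_right hlt h2g1
          have hmltR : (m : ℝ) < (μ : ℝ) := by rw [hmreal]; linarith
          have hmlt : m.toNat < μ := by
            have h7 : m < (μ : ℤ) := by exact_mod_cast hmltR
            omega
          have hbound : Tj.val * 2 ^ (g + 1) ≤ ((m.toNat : ℕ) : ℝ) := by
            rw [← hmreal]
            exact_mod_cast (Int.self_le_toNat m)
          obtain ⟨T'', hT''v, hT''h, hT''val⟩ :=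
            IHμ m.toNat hmlt Tj (a - j) (p * 2 ^ (ce + 1) - 1) hTjv hTjh hpjodd hTjz hbound
          refine ⟨T'', hT''v, hT''h, ?_⟩
          rw [hT''val, hTjval]
          have hkeq2 : a - j = (a - (j + 1)) + 1 := by omega
          rw [hkeq2, pow_succ]
          ring
      obtain ⟨T', hT'v, hT'h, hT'val⟩ := chain (a - n) (by omega)
      refine ⟨T', hT'v, hT'h, ?_⟩
      rw [hT'val, hzval]
      have : a - (a - n) = n := by omega
      rw [this]
  · -- b < a
    have hqodd : Odd q := hqo.resolve_left (by omega)
    have hz2 : (R.val + L.val + 1) / 2 = (p : ℝ) / 2 ^ n := by rw [add_comm R.val]; exact hzLR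
    obtain ⟨T', hT'⟩ := step g SubIH R L hRv hLv (by rw [abs_sub_comm]; exact hd) hRh hLh
      b a r q hy hx hab hqodd n p hp hz2
    refine ⟨T', hT'.1, hT'.2.1, ?_⟩
    rw [hzval, hT'.2.2, add_comm R.val]


theorem predecessor_formula (p : ℤ) (n : ℕ) (z : ℝ) (hp : Odd p)
    (hzval : z = (p : ℝ) / 2 ^ n) (hz : Fusible z)
    (hsucc : ∃ w : ℝ, IsGreatest {u : ℝ | Fusible u ∧ u < z} w) :
    IsGreatest {u : ℝ | Fusible u ∧ u < z} (((p : ℝ) - 1) / 2 ^ n) := by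
  obtain ⟨w, hwmem, hwub⟩ := hsucc
  obtain ⟨hwF, hwlt⟩ := hwmem
  have h2n : (0:ℝ) < 2 ^ n := by positivity
  -- z - 1/2^n is fusible
  obtain ⟨T, hTv, hTz⟩ := tree_of_fusible hz
  obtain ⟨k, hk⟩ := grid T T.height le_rfl
  have h2h : (0:ℝ) < 2 ^ T.height := by positivity
  have hk0 : 0 ≤ k := by
    have hv0 := val_nonneg T
    rw [hk] at hv0
    have : (0:ℝ) ≤ (k:ℝ) := by
      by_contra hneg
      push_neg at hneg
      have : (k:ℝ) / 2 ^ T.height < 0 := div_neg_of_neg_of_pos hneg h2h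
      linarith
    exact_mod_cast this
  obtain ⟨T', hT'v, hT'h, hT'val⟩ := sub_ulp T.height k.toNat T n p hTv le_rfl hp
    (by rw [hTz]; exact hzval)
    (by rw [hk, div_mul_cancel₀ _ h2h.ne']; exact_mod_cast (Int.self_le_toNat k))
  have hzm : T'.val = z - 1 / 2 ^ n := by rw [hT'val, hTz]
  have hzmF : Fusible (z - 1 / 2 ^ n) := hzm ▸ fusible_of_tree T' hT'v
  have hform : ((p : ℝ) - 1) / 2 ^ n = z - 1 / 2 ^ n := by
    rw [hzval, sub_div]
  have hmemb : ((p : ℝ) - 1) / 2 ^ n ∈ {u : ℝ | Fusible u ∧ u < z} := by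
    rw [hform]
    exact ⟨hzmF, sub_lt_self z (by positivity)⟩
  -- now show w ≤ z - 1/2^n
  have hwle : w ≤ z - 1 / 2 ^ n := by
    by_contra hcon
    push_neg at hcon
    obtain ⟨Tw, hTwv, hTwz⟩ := tree_of_fusible hwF
    set m : ℕ := Tw.height with hmdef
    obtain ⟨kw, hkw⟩ := grid Tw m le_rfl
    have hkwz : w = (kw : ℝ) / 2 ^ m := by rw [← hTwz, hkw]
    have h2m : (0:ℝ) < 2 ^ m := by positivity
    rcases le_or_gt m n with hmn | hnm
    · -- w is on the 2^-n grid strictly between (p-1)/2^n and p/2^n : impossible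
      have hwgrid : w = ((kw * 2 ^ (n - m) : ℤ) : ℝ) / 2 ^ n := by
        rw [hkwz]
        have : n = m + (n - m) := by omega
        rw [this, pow_add]
        push_cast
        field_simp
        rw [Nat.add_sub_cancel_left]
      have hlow : (p : ℝ) - 1 < (kw * 2 ^ (n - m) : ℤ) := by
        have := hcon
        rw [hwgrid, ← hform] at this
        rw [div_lt_div_iff₀ h2n h2n] at this
        nlinarith [this]
      have hhigh : ((kw * 2 ^ (n - m) : ℤ) : ℝ) < (p : ℝ) := by
        have := hwlt
        rw [hwgrid, hzval, div_lt_div_iff₀ h2n h2n] at this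
        nlinarith [this]
      have h1 : p - 1 < kw * 2 ^ (n - m) := by exact_mod_cast hlow
      have h2 : kw * 2 ^ (n - m) < p := by exact_mod_cast hhigh
      omega
    · -- m > n : z is on the 2^-m grid, so z - w ≥ 2^-m ; gap_above gives a contradiction
      have hzgrid : z = ((p * 2 ^ (m - n) : ℤ) : ℝ) / 2 ^ m := by
        rw [hzval]
        have : m = n + (m - n) := by omega
        rw [this, pow_add]
        push_cast
        field_simp
        rw [Nat.add_sub_cancel_left]
      have hkwlt : kw < p * 2 ^ (m - n) := by
        have := hwlt
        rw [hkwz, hzgrid, div_lt_div_iff₀ h2m h2m] at this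
        have : (kw : ℝ) < ((p * 2 ^ (m - n) : ℤ) : ℝ) := by nlinarith [this]
        exact_mod_cast this
      have hgap : w + 1 / 2 ^ m ≤ z := by
        rw [hkwz, hzgrid, ← add_div]
        have hstep : (kw : ℝ) + 1 ≤ ((p * 2 ^ (m - n) : ℤ) : ℝ) := by
          have : kw + 1 ≤ p * 2 ^ (m - n) := by omega
          exact_mod_cast this
        rw [div_le_div_iff₀ h2m h2m]
        nlinarith [hstep]
      obtain ⟨u, huF, hu1, hu2⟩ := gap_above Tw hTwv
      rw [hTwz] at hu1 hu2
      have huz : u < z := by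
        calc u < w + 1 / 2 ^ m := hu2
          _ ≤ z := hgap
      have := hwub ⟨huF, huz⟩
      linarith
  refine ⟨hmemb, ?_⟩
  intro u humem
  have h1 := hwub humem
  rw [hform]
  linarith
end

section
/- If z > 1 is a fusible number that is a limit of smaller fusible numbers, then z = (x + y + 1)/2 for some fusible x, y with |y − x| < 1 such that at least one of x, y is itself a limit of smaller fusible numbers. -/
/-! ### Basic lemmas -/

theorem Fusible.nonneg {x : ℝ} (h : Fusible x) : 0 ≤ x := by
  induction h with
  | zero => exact le_rfl
  | fuse x y _ _ _ ihx ihy => nlinarith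

theorem fusible_tree {x : ℝ} (h : Fusible x) :
    ∃ T : RepTree, T.Valid ∧ T.val = x := by
  induction h with
  | zero => exact ⟨.leaf, trivial, rfl⟩
  | fuse x y _ _ hxy ihx ihy =>
    obtain ⟨T1, h1, e1⟩ := ihx
    obtain ⟨T2, h2, e2⟩ := ihy
    exact ⟨.node T1 T2, ⟨h1, h2, by show |T2.val - T1.val| < 1; rw [e1, e2]; exact hxy⟩,
      by show (T1.val + T2.val + 1) / 2 = _; rw [e1, e2]⟩

theorem tree_fusible (T : RepTree) (h : T.Valid) : Fusible T.val := by
  induction T with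
  | leaf => exact Fusible.zero
  | node l r ihl ihr =>
    obtain ⟨hl, hr, hlr⟩ := h
    exact Fusible.fuse _ _ (ihl hl) (ihr hr) hlr

/-- minimal height of a representation -/
noncomputable def Hmin (x : ℝ) : ℕ :=
  sInf {n | ∃ T : RepTree, T.Valid ∧ T.val = x ∧ T.height = n}

theorem Hmin_spec {x : ℝ} (h : Fusible x) :
    ∃ T : RepTree, T.Valid ∧ T.val = x ∧ T.height = Hmin x := by
  have hne : {n | ∃ T : RepTree, T.Valid ∧ T.val = x ∧ T.height = n}.Nonempty := by
    obtain ⟨T, hT, hv⟩ := fusible_tree h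
    exact ⟨T.height, T, hT, hv, rfl⟩
  exact Nat.sInf_mem hne

theorem Hmin_le {x : ℝ} (T : RepTree) (hT : T.Valid) (hv : T.val = x) :
    Hmin x ≤ T.height :=
  Nat.sInf_le ⟨T, hT, hv, rfl⟩

/-- any nonzero fusible decomposes, with children from a minimal-height tree -/
theorem fusible_decomp {z : ℝ} (h : Fusible z) (hz : z ≠ 0) :
    ∃ x y : ℝ, Fusible x ∧ Fusible y ∧ |y - x| < 1 ∧ z = (x + y + 1) / 2 ∧
      Hmin x < Hmin z ∧ Hmin y < Hmin z := by
  obtain ⟨T, hT, hv, hh⟩ := Hmin_spec h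
  cases T with
  | leaf => exact absurd hv.symm hz
  | node l r =>
    obtain ⟨hl, hr, hlr⟩ := hT
    refine ⟨l.val, r.val, tree_fusible l hl, tree_fusible r hr, hlr, hv.symm, ?_, ?_⟩
    · calc Hmin l.val ≤ l.height := Hmin_le l hl rfl
      _ < (RepTree.node l r).height := by
          rw [RepTree.height]; omega
      _ = Hmin z := hh
    · calc Hmin r.val ≤ r.height := Hmin_le r hr rfl
      _ < (RepTree.node l r).height := by
          rw [RepTree.height]; omega
      _ = Hmin z := hh

/-- children bounds: each child is strictly between `z - 1` and `z`. -/
theorem child_bounds {x y z : ℝ} (hxy : |y - x| < 1) (hz : z = (x + y + 1) / 2) :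
    z - 1 < x ∧ x < z ∧ z - 1 < y ∧ y < z := by
  rw [abs_lt] at hxy
  constructor
  · nlinarith [hxy.1, hxy.2]
  constructor
  · nlinarith [hxy.1, hxy.2]
  constructor
  · nlinarith [hxy.1, hxy.2]
  · nlinarith [hxy.1, hxy.2]

/-! ### Well-ordering of the fusible numbers -/

open Set

/-- peaks lemma: every real sequence has a monotone or strictly decreasing subsequence -/
theorem exists_mono_or_anti (f : ℕ → ℝ) :
    ∃ φ : ℕ → ℕ, StrictMono φ ∧ (Monotone (f ∘ φ) ∨ StrictAnti (f ∘ φ)) := by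
  classical
  by_cases hP : {i : ℕ | ∀ j, i < j → f j < f i}.Infinite
  · -- infinitely many peaks: strictly decreasing subsequence
    obtain ⟨φ, hφmono, hφmem⟩ : ∃ φ : ℕ → ℕ, StrictMono φ ∧
        ∀ n, φ n ∈ {i : ℕ | ∀ j, i < j → f j < f i} := by
      refine ⟨fun n => Nat.nth (· ∈ {i : ℕ | ∀ j, i < j → f j < f i}) n,
        Nat.nth_strictMono hP, fun n => Nat.nth_mem_of_infinite hP n⟩
    refine ⟨φ, hφmono, Or.inr (strictAnti_nat_of_succ_lt fun n => ?_)⟩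
    exact hφmem n _ (hφmono (Nat.lt_succ_self n))
  · -- finitely many peaks
    rw [Set.not_infinite] at hP
    obtain ⟨N, hN⟩ : ∃ N, ∀ i, N ≤ i → i ∉ {i : ℕ | ∀ j, i < j → f j < f i} := by
      rcases Set.Finite.bddAbove hP with ⟨N, hN⟩
      exact ⟨N + 1, fun i hi hmem => by
        have := hN hmem; omega⟩
    -- from each i ≥ N there is j > i with f i ≤ f j
    have key : ∀ i, N ≤ i → ∃ j, i < j ∧ f i ≤ f j := by
      intro i hi
      have := hN i hi
      simp only [Set.mem_setOf_eq, not_forall, not_lt] at this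
      obtain ⟨j, hj, hfj⟩ := this
      exact ⟨j, hj, hfj⟩
    choose nxt hnxt₁ hnxt₂ using key
    -- iterate
    let step : ℕ → ℕ := fun prev => if h : N ≤ prev then nxt prev h else prev
    let φ : ℕ → ℕ := fun n => step^[n] N
    have hφge : ∀ n, N ≤ φ n := by
      intro n
      induction n with
      | zero => exact le_rfl
      | succ n ih =>
        show N ≤ step^[n+1] N
        rw [Function.iterate_succ_apply']
        show N ≤ (if h : N ≤ step^[n] N then nxt _ h else _)
        rw [dif_pos ih]
        exact le_trans ih (le_of_lt (hnxt₁ _ ih))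
    have hφsucc : ∀ n, φ (n+1) = nxt (φ n) (hφge n) := by
      intro n
      show step^[n+1] N = _
      rw [Function.iterate_succ_apply']
      show (if h : N ≤ step^[n] N then nxt _ h else _) = _
      rw [dif_pos (hφge n)]
    refine ⟨φ, strictMono_nat_of_lt_succ fun n => ?_, Or.inl (monotone_nat_of_le_succ fun n => ?_)⟩
    · rw [hφsucc n]; exact hnxt₁ _ _
    · show f (φ n) ≤ f (φ (n+1))
      rw [hφsucc n]; exact hnxt₂ _ _

/-- The set of fusible numbers is partially well ordered: key well-ordering theorem. -/
theorem fusible_isPWO : {x : ℝ | Fusible x}.IsPWO := by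
  classical
  rw [Set.IsPWO, Set.PartiallyWellOrderedOn.iff_not_exists_isMinBadSeq Hmin]
  rintro ⟨f, hbad, hmin⟩
  -- f is strictly decreasing, all fusible
  have hfus : ∀ n, Fusible (f n) := hbad.1
  have hdec : ∀ m n, m < n → f n < f m := fun m n hmn => not_le.1 (hbad.2 m n hmn)
  have hpos : ∀ n, 0 < f n := fun n =>
    lt_of_le_of_lt (hfus (n+1)).nonneg (hdec n (n+1) (Nat.lt_succ_self n))
  -- decompose each f n
  have hdc : ∀ n, ∃ x y : ℝ, Fusible x ∧ Fusible y ∧ |y - x| < 1 ∧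
      f n = (x + y + 1) / 2 ∧ Hmin x < Hmin (f n) ∧ Hmin y < Hmin (f n) :=
    fun n => fusible_decomp (hfus n) (ne_of_gt (hpos n))
  choose X Y hXf hYf hXY hfXY hHX hHY using hdc
  let a : ℕ → ℝ := fun n => min (X n) (Y n)
  let b : ℕ → ℝ := fun n => max (X n) (Y n)
  have hcases : ∀ n, (a n = X n ∧ b n = Y n) ∨ (a n = Y n ∧ b n = X n) := by
    intro n
    rcases le_total (X n) (Y n) with h | h
    · exact Or.inl ⟨min_eq_left h, max_eq_right h⟩
    · exact Or.inr ⟨min_eq_right h, max_eq_left h⟩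
  have hafus : ∀ n, Fusible (a n) := by
    intro n; rcases hcases n with ⟨h, _⟩ | ⟨h, _⟩ <;> rw [h]
    exacts [hXf n, hYf n]
  have hbfus : ∀ n, Fusible (b n) := by
    intro n; rcases hcases n with ⟨_, h⟩ | ⟨_, h⟩ <;> rw [h]
    exacts [hYf n, hXf n]
  have hHa : ∀ n, Hmin (a n) < Hmin (f n) := by
    intro n; rcases hcases n with ⟨h, _⟩ | ⟨h, _⟩ <;> rw [h]
    exacts [hHX n, hHY n]
  have hHb : ∀ n, Hmin (b n) < Hmin (f n) := by
    intro n; rcases hcases n with ⟨_, h⟩ | ⟨_, h⟩ <;> rw [h]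
    exacts [hHY n, hHX n]
  have hale : ∀ n, a n ≤ b n := fun n => min_le_max
  have hab : ∀ n, a n + b n = 2 * f n - 1 := by
    intro n
    have h1 : a n + b n = X n + Y n := min_add_max _ _
    rw [h1, hfXY n]; ring
  have haub : ∀ n, b n - a n < 1 := by
    intro n
    have h1 : b n - a n = |Y n - X n| := by
      rcases hcases n with ⟨h2, h3⟩ | ⟨h2, h3⟩ <;> rw [h2, h3]
      · rw [abs_of_nonneg (by cases min_cases (X n) (Y n) <;> cases max_cases (X n) (Y n) <;> linarith [min_le_max (a := X n) (b := Y n)])]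
      · rw [abs_of_nonpos (by cases min_cases (X n) (Y n) <;> cases max_cases (X n) (Y n) <;> linarith [min_le_max (a := X n) (b := Y n)])]; ring
    rw [h1]; exact hXY n
  have halt : ∀ n, a n < f n := by
    intro n; nlinarith [hab n, haub n, hale n]
  have hblt : ∀ n, b n < f n := by
    intro n; nlinarith [hab n, haub n, hale n]
  -- monotone or strictly-decreasing subsequence of a
  obtain ⟨φ, hφ, hcase⟩ := exists_mono_or_anti a
  -- the spliced sequence
  have splice : ∀ (c : ℕ → ℝ), (∀ k, Fusible (c k)) → (∀ k l, k < l → c l < c k) →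
      (∀ k, c k < f (φ 0)) → Hmin (c 0) < Hmin (f (φ 0)) → False := by
    intro c hcf hcdec hclt hcH
    set m := φ 0 with hm
    set g : ℕ → ℝ := fun k => if k < m then f k else c (k - m) with hg
    have hgm : g m = c 0 := by rw [hg]; simp
    refine hmin m g (fun k hk => by rw [hg]; simp [hk]) (by rw [hgm]; exact hcH) ⟨fun k => ?_, ?_⟩
    · rw [hg]; dsimp only
      split
      · exact hfus k
      · exact hcf _
    · intro i j hij
      rw [not_le, hg]; dsimp only
      rcases lt_or_ge i m with hi | hi
      · rcases lt_or_ge j m with hj | hj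
        · rw [if_pos hi, if_pos hj]; exact hdec i j hij
        · rw [if_pos hi, if_neg (not_lt.2 hj)]
          calc c (j - m) ≤ c 0 := by
                rcases Nat.eq_zero_or_pos (j - m) with h0 | h0
                · rw [h0]
                · exact le_of_lt (hcdec 0 _ h0)
          _ < f m := hclt 0
          _ ≤ f i := le_of_lt (hdec i m hi)
      · rw [if_neg (not_lt.2 hi), if_neg ((by omega : ¬ j < m))]
        exact hcdec (i - m) (j - m) (by omega)
  rcases hcase with hmono | hanti
  · -- a∘φ monotone ⇒ b∘φ strictly decreasing: splice with it
    refine splice (fun k => b (φ k)) (fun k => hbfus _) (fun k l hkl => ?_) (fun k => ?_)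
      (hHb (φ 0))
    · have h1 : f (φ l) < f (φ k) := hdec _ _ (hφ hkl)
      have h2 : a (φ k) ≤ a (φ l) := hmono (le_of_lt hkl)
      nlinarith [hab (φ k), hab (φ l)]
    · rcases Nat.eq_zero_or_pos k with h0 | h0
      · rw [h0]; exact hblt _
      · calc b (φ k) = 2 * f (φ k) - 1 - a (φ k) := by linarith [hab (φ k)]
          _ ≤ 2 * f (φ k) - 1 - a (φ 0) := by
              have := hmono (Nat.zero_le k); simp only [Function.comp] at this; linarith
          _ < f (φ 0) := by
              have h1 : f (φ k) < f (φ 0) := hdec _ _ (hφ.lt_iff_lt.2 h0)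
              have h2 : a (φ 0) > f (φ 0) - 1 := by nlinarith [hab (φ 0), haub (φ 0)]
              linarith
  · -- a∘φ strictly decreasing: splice with it
    refine splice (fun k => a (φ k)) (fun k => hafus _) (fun k l hkl => hanti hkl) (fun k => ?_)
      (hHa (φ 0))
    rcases Nat.eq_zero_or_pos k with h0 | h0
    · rw [h0]; exact halt _
    · calc a (φ k) < a (φ 0) := hanti h0
        _ < f (φ 0) := halt _

/-! ### Consequences of well-ordering, and limit machinery -/

theorem fusible_mono_subseq (f : ℕ → ℝ) (hf : ∀ n, Fusible (f n)) :
    ∃ φ : ℕ → ℕ, StrictMono φ ∧ Monotone (f ∘ φ) := by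
  obtain ⟨g, hg⟩ := fusible_isPWO.exists_monotone_subseq (f := f) hf
  exact ⟨g, g.strictMono, fun m n hmn => hg hmn⟩


/-- elements of a set with LUB `s` exist above any `b < s` -/
theorem limit_exists_between {s b : ℝ} (h : IsLimitFusible s) (hb : b < s) :
    ∃ w, Fusible w ∧ b < w ∧ w < s := by
  obtain ⟨w, hw, hbw⟩ := (lt_isLUB_iff h).1 hb
  exact ⟨w, hw.1, hbw, hw.2⟩

theorem limit_pos {s : ℝ} (h : IsLimitFusible s) : 0 < s := by
  by_contra hs
  push_neg at hs
  -- the set is empty, so s cannot be a LUB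
  have hempty : {w : ℝ | Fusible w ∧ w < s} = ∅ := by
    ext w
    simp only [Set.mem_setOf_eq, Set.mem_empty_iff_false, iff_false, not_and, not_lt]
    intro hw
    exact le_trans hs hw.nonneg
  have h2 : s ≤ s - 1 := by
    apply h.2
    intro x hx
    rw [hempty] at hx
    exact absurd hx (Set.notMem_empty x)
  linarith

/-- an approach sequence: strictly increasing fusibles whose LUB is `s` -/
theorem limit_approach_seq {s : ℝ} (h : IsLimitFusible s) :
    ∃ z : ℕ → ℝ, (∀ i, Fusible (z i)) ∧ StrictMono z ∧ (∀ i, z i < s) ∧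
      IsLUB (Set.range z) s := by
  have hs := limit_pos h
  -- lower cutoffs c i = s - s/2^(i+1), increasing to s
  set c : ℕ → ℝ := fun i => s - s / 2 ^ (i + 1) with hc
  have hcs : ∀ i, c i < s := by
    intro i
    have : (0:ℝ) < s / 2 ^ (i+1) := by positivity
    rw [hc]; dsimp only; linarith
  have key : ∀ i (b : ℝ), b < s → ∃ w, Fusible w ∧ b < w ∧ c i < w ∧ w < s := by
    intro i b hb
    obtain ⟨w, hw, hbw, hws⟩ := limit_exists_between h (max_lt hb (hcs i))
    exact ⟨w, hw, lt_of_le_of_lt (le_max_left b (c i)) hbw,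
      lt_of_le_of_lt (le_max_right b (c i)) hbw, hws⟩
  -- recursively construct
  choose W hW1 hW2 hW3 hW4 using key
  let zz : ℕ → {w : ℝ // Fusible w ∧ w < s} := fun n =>
    Nat.rec ⟨W 0 (c 0) (hcs 0), hW1 0 (c 0) (hcs 0), hW4 0 (c 0) (hcs 0)⟩
      (fun i prev => ⟨W (i+1) prev.1 prev.2.2, hW1 (i+1) prev.1 prev.2.2,
        hW4 (i+1) prev.1 prev.2.2⟩) n
  set z : ℕ → ℝ := fun n => (zz n).1 with hz
  have hzfus : ∀ i, Fusible (z i) := fun i => (zz i).2.1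
  have hzlt : ∀ i, z i < s := fun i => (zz i).2.2
  have hzsucc : ∀ i, z (i+1) = W (i+1) (z i) (hzlt i) := fun i => rfl
  have hzmono : StrictMono z := by
    apply strictMono_nat_of_lt_succ
    intro n
    rw [hzsucc n]
    exact hW2 (n+1) (z n) (hzlt n)
  have hzc : ∀ i, c i < z i := by
    intro i
    cases i with
    | zero => exact hW3 0 (c 0) (hcs 0)
    | succ n => rw [hzsucc n]; exact hW3 (n+1) (z n) (hzlt n)
  refine ⟨z, hzfus, hzmono, hzlt, ⟨fun w hw => ?_, fun u hu => ?_⟩⟩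
  · obtain ⟨i, rfl⟩ := hw
    exact le_of_lt (hzlt i)
  · -- u is an upper bound of range z, so u ≥ c i for all i, so u ≥ s
    by_contra hus
    push_neg at hus
    obtain ⟨n, hn⟩ := exists_pow_lt_of_lt_one (x := (s - u)/s) (y := (1:ℝ)/2)
      (div_pos (by linarith) hs) (by norm_num)
    have hn' : s < (s - u) * 2 ^ n := by
      have hp : (0:ℝ) < 2 ^ n := by positivity
      rw [div_pow, one_pow, div_lt_div_iff₀ hp hs] at hn
      linarith [hn]
    have h2 : s / 2 ^ (n+1) < s - u := by
      rw [div_lt_iff₀ (by positivity : (0:ℝ) < 2^(n+1))]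
      have hle : (2:ℝ)^n ≤ 2^(n+1) := by
        apply pow_le_pow_right₀ (by norm_num) (Nat.le_succ n)
      nlinarith [hn', hle, hus]
    have h1 : u < c n := by
      rw [hc]; dsimp only; linarith
    have := hu ⟨n, rfl⟩
    linarith [hzc n]

/-! ### LUB utilities -/

theorem isLUB_range_add {f g : ℕ → ℝ} {α β : ℝ} (hf : Monotone f) (hg : Monotone g)
    (ha : IsLUB (Set.range f) α) (hb : IsLUB (Set.range g) β) :
    IsLUB (Set.range fun n => f n + g n) (α + β) := by
  constructor
  · rintro w ⟨n, rfl⟩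
    exact add_le_add (ha.1 ⟨n, rfl⟩) (hb.1 ⟨n, rfl⟩)
  · intro u hu
    have key : ∀ m n : ℕ, f m + g n ≤ u := by
      intro m n
      rcases le_total m n with h | h
      · calc f m + g n ≤ f n + g n := by gcongr; exact hf h
          _ ≤ u := hu ⟨n, rfl⟩
      · calc f m + g n ≤ f m + g m := by gcongr; exact hg h
          _ ≤ u := hu ⟨m, rfl⟩
    have h1 : ∀ n : ℕ, β ≤ u - f n := by
      intro n
      apply hb.2
      rintro w ⟨m, rfl⟩
      linarith [key n m]
    have h2 : α ≤ u - β := by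
      apply ha.2
      rintro w ⟨n, rfl⟩
      linarith [h1 n]
    linarith

theorem isLUB_range_affine {f : ℕ → ℝ} {σ : ℝ} (h : IsLUB (Set.range f) σ) :
    IsLUB (Set.range fun n => 2 * f n - 1) (2 * σ - 1) := by
  constructor
  · rintro w ⟨n, rfl⟩
    show 2 * f n - 1 ≤ 2 * σ - 1
    have := h.1 (Set.mem_range_self n)
    linarith
  · intro u hu
    have : σ ≤ (u + 1) / 2 := by
      apply h.2
      rintro w ⟨n, rfl⟩
      have := hu ⟨n, rfl⟩
      dsimp at this ⊢
      linarith
    linarith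

/-- a monotone sequence of fusibles with LUB α: either α is attained (hence fusible),
or α is a limit fusible point -/
theorem mono_lub_alt {f : ℕ → ℝ} {α : ℝ} (hfus : ∀ n, Fusible (f n))
    (ha : IsLUB (Set.range f) α) :
    (∃ n, f n = α) ∨ IsLimitFusible α := by
  by_cases hconst : ∃ n, f n = α
  · exact Or.inl hconst
  · push_neg at hconst
    have hlt : ∀ n, f n < α := fun n =>
      lt_of_le_of_ne (ha.1 (Set.mem_range_self n)) (hconst n)
    refine Or.inr ⟨?_, ?_⟩
    · rintro w ⟨hw1, hw2⟩
      exact le_of_lt hw2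
    · intro u hu
      apply ha.2
      rintro w ⟨n, rfl⟩
      exact hu ⟨hfus n, hlt n⟩

/-! ### The explicit construction for the degenerate case -/

theorem killer {s : ℝ} (hs1 : 1 < s) (h1 : Fusible (s - 1)) :
    ∃ x y : ℝ, Fusible x ∧ Fusible y ∧ |y - x| < 1 ∧ s = (x + y + 1) / 2 ∧
      IsLimitFusible y := by
  obtain ⟨x₁, y₁, hx₁, hy₁, hxy₁, hdef, -, -⟩ :=
    fusible_decomp h1 (sub_ne_zero.2 (ne_of_gt hs1))
  obtain ⟨hb1, hb2, hb3, hb4⟩ := child_bounds hxy₁ hdef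
  -- bounds: s - 2 < x₁ < s - 1 and s - 2 < y₁ < s - 1
  have hx₁b : s - 2 < x₁ ∧ x₁ < s - 1 := ⟨by linarith, by linarith⟩
  have hy₁b : s - 2 < y₁ ∧ y₁ < s - 1 := ⟨by linarith, by linarith⟩
  have hsum : x₁ + y₁ = 2 * s - 3 := by
    have : s - 1 = (x₁ + y₁ + 1) / 2 := hdef
    linarith
  -- x := (s-1) ~ x₁
  have hxfus : Fusible ((s - 1 + x₁ + 1) / 2) := by
    apply Fusible.fuse _ _ h1 hx₁
    rw [abs_lt]; constructor <;> linarith [hx₁b.1, hx₁b.2]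
  set x : ℝ := (s - 1 + x₁ + 1) / 2 with hxdef
  -- y₁ + 1 is fusible (two self-fuses)
  have hyhalf : Fusible (y₁ + 1/2) := by
    have := Fusible.fuse y₁ y₁ hy₁ hy₁ (by simp)
    have e : (y₁ + y₁ + 1) / 2 = y₁ + 1/2 := by ring
    rwa [e] at this
  have hyone : Fusible (y₁ + 1) := by
    have := Fusible.fuse _ _ hyhalf hyhalf (by simp)
    have e : (y₁ + 1/2 + (y₁ + 1/2) + 1) / 2 = y₁ + 1 := by ring
    rwa [e] at this
  -- y := (s-1) ~ (y₁+1)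
  have hyfus : Fusible ((s - 1 + (y₁ + 1) + 1) / 2) := by
    apply Fusible.fuse _ _ h1 hyone
    rw [abs_lt]; constructor <;> linarith [hy₁b.1, hy₁b.2]
  set y : ℝ := (s - 1 + (y₁ + 1) + 1) / 2 with hydef
  have hyval : y = (s + y₁ + 1) / 2 := by rw [hydef]; ring_nf
  refine ⟨x, y, hxfus, hyfus, ?_, ?_, ?_⟩
  · -- |y - x| < 1
    rw [hxdef, hydef, abs_lt]
    rw [abs_lt] at hxy₁
    constructor <;> [nlinarith; nlinarith]
  · -- s = (x + y + 1)/2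
    rw [hxdef, hydef]; linarith [hsum]
  · -- y is a limit
    -- the approaching family
    have hstep : ∀ w : ℝ, Fusible w → y₁ < w → w < y₁ + 1 →
        Fusible ((y₁ + w + 1) / 2) ∧ y₁ < (y₁ + w + 1) / 2 ∧ (y₁ + w + 1) / 2 < y₁ + 1 ∧
          w < (y₁ + w + 1) / 2 := by
      intro w hw hlw huw
      refine ⟨Fusible.fuse _ _ hy₁ hw (by rw [abs_lt]; constructor <;> linarith), by linarith,
        by linarith, by linarith⟩
    let v : ℕ → {w : ℝ // Fusible w ∧ y₁ < w ∧ w < y₁ + 1} := fun n =>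
      Nat.rec ⟨s - 1, h1, hb4, by linarith [hy₁b.1]⟩
        (fun _ prev => ⟨(y₁ + prev.1 + 1) / 2,
          (hstep prev.1 prev.2.1 prev.2.2.1 prev.2.2.2).1,
          (hstep prev.1 prev.2.1 prev.2.2.1 prev.2.2.2).2.1,
          (hstep prev.1 prev.2.1 prev.2.2.1 prev.2.2.2).2.2.1⟩) n
    have hv0 : (v 0).1 = s - 1 := rfl
    have hvsucc : ∀ n, (v (n+1)).1 = (y₁ + (v n).1 + 1) / 2 := fun n => rfl
    -- explicit distance formula
    have hvdist : ∀ n, y₁ + 1 - (v n).1 = (y₁ + 2 - s) * (1/2) ^ n := by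
      intro n
      induction n with
      | zero => rw [hv0]; ring
      | succ n ih =>
        rw [hvsucc n, pow_succ]
        have : y₁ + 1 - (y₁ + (v n).1 + 1) / 2 = (y₁ + 1 - (v n).1) / 2 := by ring
        rw [this, ih]; ring
    have hC : 0 < y₁ + 2 - s := by linarith [hy₁b.1]
    -- w_r := (s-1) ~ v_r
    have hwfus : ∀ n, Fusible ((s - 1 + (v n).1 + 1) / 2) := by
      intro n
      apply Fusible.fuse _ _ h1 (v n).2.1
      rw [abs_lt]
      constructor <;> linarith [(v n).2.2.1, (v n).2.2.2, hy₁b.1, hy₁b.2]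
    have hwlt : ∀ n, (s - 1 + (v n).1 + 1) / 2 < y := by
      intro n
      rw [hydef]
      linarith [(v n).2.2.2]
    constructor
    · rintro w ⟨hw1, hw2⟩
      exact le_of_lt hw2
    · intro u hu
      by_contra huy
      push_neg at huy
      -- choose n with (y₁+2-s)*(1/2)^(n+1) < y - u
      obtain ⟨n, hn⟩ := exists_pow_lt_of_lt_one (x := (y - u) / (y₁ + 2 - s)) (y := (1:ℝ)/2)
        (div_pos (by linarith) hC) (by norm_num)
      have hwn : u < (s - 1 + (v n).1 + 1) / 2 := by
        have hd : y - (s - 1 + (v n).1 + 1) / 2 = (y₁ + 1 - (v n).1) / 2 := by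
          rw [hydef]; ring
      -- (y₁+2-s)*(1/2)^n < y - u  (after clearing the division)
        have hn' : (y₁ + 2 - s) * (1/2:ℝ) ^ n < y - u := by
          rw [lt_div_iff₀ hC] at hn
          nlinarith [hn]
        have hp : (0:ℝ) < (1/2:ℝ) ^ n := by positivity
        rw [hvdist n] at hd
        nlinarith [hd, hn']
      have := hu ⟨hwfus n, hwlt n⟩
      linarith

/-! ### The core analysis at a limit point -/

theorem core {s : ℝ} (hlim : IsLimitFusible s)
    (ih : ∀ σ : ℝ, σ < s → IsLimitFusible σ → Fusible σ) :
    Fusible s ∧ (1 < s → ∃ x y : ℝ, Fusible x ∧ Fusible y ∧ |y - x| < 1 ∧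
      s = (x + y + 1) / 2 ∧ (IsLimitFusible x ∨ IsLimitFusible y)) := by
  classical
  have hs : 0 < s := limit_pos hlim
  obtain ⟨z₀, hz₀fus, hz₀mono, hz₀lt, hz₀lub⟩ := limit_approach_seq hlim
  -- shift to ensure positivity
  set z : ℕ → ℝ := fun i => z₀ (i + 1) with hzdef
  have hzfus : ∀ i, Fusible (z i) := fun i => hz₀fus (i+1)
  have hzmono : StrictMono z := fun i j hij => hz₀mono (by omega : i + 1 < j + 1)
  have hzlt : ∀ i, z i < s := fun i => hz₀lt (i+1)
  have hzpos : ∀ i, 0 < z i := by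
    intro i
    calc (0:ℝ) ≤ z₀ 0 := (hz₀fus 0).nonneg
      _ < z₀ (i+1) := hz₀mono (by omega)
  have hzlub : IsLUB (Set.range z) s := by
    constructor
    · rintro w ⟨i, rfl⟩; exact le_of_lt (hzlt i)
    · intro u hu
      apply hz₀lub.2
      rintro w ⟨i, rfl⟩
      calc z₀ i ≤ z₀ (i+1) := le_of_lt (hz₀mono (by omega))
        _ ≤ u := hu ⟨i, rfl⟩
  -- decompose each z i
  have hdc : ∀ i, ∃ x y : ℝ, Fusible x ∧ Fusible y ∧ |y - x| < 1 ∧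
      z i = (x + y + 1) / 2 ∧ Hmin x < Hmin (z i) ∧ Hmin y < Hmin (z i) :=
    fun i => fusible_decomp (hzfus i) (ne_of_gt (hzpos i))
  choose X Y hXf hYf hXY hfXY _ _ using hdc
  let a : ℕ → ℝ := fun n => min (X n) (Y n)
  let b : ℕ → ℝ := fun n => max (X n) (Y n)
  have hcases : ∀ n, (a n = X n ∧ b n = Y n) ∨ (a n = Y n ∧ b n = X n) := by
    intro n
    rcases le_total (X n) (Y n) with h | h
    · exact Or.inl ⟨min_eq_left h, max_eq_right h⟩
    · exact Or.inr ⟨min_eq_right h, max_eq_left h⟩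
  have hafus : ∀ n, Fusible (a n) := by
    intro n; rcases hcases n with ⟨h, _⟩ | ⟨h, _⟩ <;> rw [h]
    exacts [hXf n, hYf n]
  have hbfus : ∀ n, Fusible (b n) := by
    intro n; rcases hcases n with ⟨_, h⟩ | ⟨_, h⟩ <;> rw [h]
    exacts [hYf n, hXf n]
  have hale : ∀ n, a n ≤ b n := fun n => min_le_max
  have hab : ∀ n, a n + b n = 2 * z n - 1 := by
    intro n
    have h1 : a n + b n = X n + Y n := min_add_max _ _
    rw [h1, hfXY n]; ring
  have haub : ∀ n, b n - a n < 1 := by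
    intro n
    have h1 : b n - a n = |Y n - X n| := by
      rcases hcases n with ⟨h2, h3⟩ | ⟨h2, h3⟩ <;> rw [h2, h3]
      · rw [abs_of_nonneg (by cases min_cases (X n) (Y n) <;> cases max_cases (X n) (Y n) <;>
          linarith [min_le_max (a := X n) (b := Y n)])]
      · rw [abs_of_nonpos (by cases min_cases (X n) (Y n) <;> cases max_cases (X n) (Y n) <;>
          linarith [min_le_max (a := X n) (b := Y n)])]
        ring
    rw [h1]; exact hXY n
  have hble : ∀ n, b n < z n := by
    intro n; nlinarith [hab n, haub n, hale n]
  have hage : ∀ n, z n - 1 < a n := by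
    intro n; nlinarith [hab n, haub n, hale n]
  have hamid : ∀ n, a n ≤ z n - 1/2 := by
    intro n; nlinarith [hab n, hale n]
  -- extract subsequences on which a and b are both monotone
  obtain ⟨φ₁, hφ₁, hamono₁⟩ := fusible_mono_subseq a hafus
  obtain ⟨φ₂, hφ₂, hbmono₂⟩ := fusible_mono_subseq (b ∘ φ₁) (fun n => hbfus _)
  set ψ : ℕ → ℕ := φ₁ ∘ φ₂ with hψdef
  have hψ : StrictMono ψ := hφ₁.comp hφ₂
  set A : ℕ → ℝ := fun k => a (ψ k) with hA
  set B : ℕ → ℝ := fun k => b (ψ k) with hB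
  set Z : ℕ → ℝ := fun k => z (ψ k) with hZ
  have hAmono : Monotone A := fun i j hij => hamono₁ (hφ₂.monotone hij)
  have hBmono : Monotone B := fun i j hij => hbmono₂ hij
  have hZmono : StrictMono Z := hzmono.comp hψ
  have hZlub : IsLUB (Set.range Z) s := by
    constructor
    · rintro w ⟨i, rfl⟩; exact le_of_lt (hzlt _)
    · intro u hu
      apply hzlub.2
      rintro w ⟨i, rfl⟩
      calc z i ≤ z (ψ i) := hzmono.monotone (hψ.le_apply)
        _ ≤ u := hu ⟨i, rfl⟩
  -- the limits
  obtain ⟨α, hαlub⟩ := Real.exists_isLUB (Set.range_nonempty A) ⟨s, by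
    rintro w ⟨k, rfl⟩
    exact le_of_lt (lt_trans (lt_of_le_of_lt (hale _) (hble _)) (hzlt _))⟩
  obtain ⟨β, hβlub⟩ := Real.exists_isLUB (Set.range_nonempty B) ⟨s, by
    rintro w ⟨k, rfl⟩
    exact le_of_lt (lt_trans (hble _) (hzlt _))⟩
  have hsum : α + β = 2 * s - 1 := by
    have h1 : IsLUB (Set.range fun k => A k + B k) (α + β) :=
      isLUB_range_add hAmono hBmono hαlub hβlub
    have h2 : IsLUB (Set.range fun k => 2 * Z k - 1) (2 * s - 1) :=
      isLUB_range_affine hZlub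
    have h3 : (fun k => A k + B k) = fun k => 2 * Z k - 1 := by
      funext k
      exact hab (ψ k)
    rw [h3] at h1
    exact h1.unique h2
  have hβles : β ≤ s := by
    apply hβlub.2
    rintro w ⟨k, rfl⟩
    exact le_of_lt (lt_trans (hble _) (hzlt _))
  have hαmid : α ≤ s - 1/2 := by
    apply hαlub.2
    rintro w ⟨k, rfl⟩
    calc a (ψ k) ≤ z (ψ k) - 1/2 := hamid _
      _ ≤ s - 1/2 := by linarith [hzlt (ψ k)]
  have hαβ : α ≤ β := by
    apply hαlub.2
    rintro w ⟨k, rfl⟩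
    exact le_trans (hale _) (hβlub.1 ⟨k, rfl⟩)
  have hαfus : Fusible α := by
    rcases mono_lub_alt (fun k => hafus _) hαlub with ⟨n, hn⟩ | h
    · exact hn ▸ hafus _
    · exact ih α (by linarith) h
  -- case split
  rcases lt_or_eq_of_le hβles with hβlt | hβeq
  · -- nondegenerate: β < s
    have hβfus : Fusible β := by
      rcases mono_lub_alt (fun k => hbfus _) hβlub with ⟨n, hn⟩ | h
      · exact hn ▸ hbfus _
      · exact ih β hβlt h
    have habs : |β - α| < 1 := by
      rw [abs_lt]
      constructor <;> [linarith; linarith]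
    have hsfus : Fusible s := by
      have := Fusible.fuse α β hαfus hβfus habs
      have e : (α + β + 1) / 2 = s := by linarith
      rwa [e] at this
    refine ⟨hsfus, fun _ => ⟨α, β, hαfus, hβfus, habs, by linarith, ?_⟩⟩
    -- at least one of the sequences is non-constant, giving a limit
    by_cases hAc : ∃ N, A N = α
    · -- A is eventually constant; then B cannot be eventually constant
      obtain ⟨N₁, hN₁⟩ := hAc
      by_cases hBc : ∃ N, B N = β
      · obtain ⟨N₂, hN₂⟩ := hBc
        exfalso
        set M := max N₁ N₂ with hM
        have hAM : A M = α := le_antisymm (hαlub.1 ⟨M, rfl⟩)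
          (hN₁ ▸ hAmono (le_max_left N₁ N₂))
        have hAM1 : A (M+1) = α := le_antisymm (hαlub.1 ⟨M+1, rfl⟩)
          (hAM ▸ hAmono (Nat.le_succ M))
        have hBM : B M = β := le_antisymm (hβlub.1 ⟨M, rfl⟩)
          (hN₂ ▸ hBmono (le_max_right N₁ N₂))
        have hBM1 : B (M+1) = β := le_antisymm (hβlub.1 ⟨M+1, rfl⟩)
          (hBM ▸ hBmono (Nat.le_succ M))
        have hZM : Z M < Z (M+1) := hZmono (Nat.lt_succ_self M)
        have e1 : A M + B M = 2 * Z M - 1 := hab (ψ M)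
        have e2 : A (M+1) + B (M+1) = 2 * Z (M+1) - 1 := hab (ψ (M+1))
        rw [hAM, hBM] at e1
        rw [hAM1, hBM1] at e2
        linarith
      · -- B non-constant: β is a limit
        push_neg at hBc
        right
        rcases mono_lub_alt (fun k => hbfus _) hβlub with ⟨n, hn⟩ | h
        · exact absurd hn (hBc n)
        · exact h
    · push_neg at hAc
      left
      rcases mono_lub_alt (fun k => hafus _) hαlub with ⟨n, hn⟩ | h
      · exact absurd hn (hAc n)
      · exact h
  · -- degenerate: β = s, so α = s - 1
    have hαval : α = s - 1 := by linarith
    have hα0 : 0 ≤ α := le_trans (hafus (ψ 0)).nonneg (hαlub.1 ⟨0, rfl⟩)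
    rcases lt_trichotomy s 1 with hlt1 | heq1 | hgt1
    · exfalso; linarith
    · subst heq1
      have h12 : Fusible ((0 + 0 + 1)/2 : ℝ) := Fusible.fuse 0 0 .zero .zero (by simp)
      have h12' : Fusible (1/2 : ℝ) := by norm_num at h12 ⊢; exact h12
      have hone : Fusible ((1/2 + 1/2 + 1)/2 : ℝ) := Fusible.fuse _ _ h12' h12' (by simp)
      have hone' : Fusible 1 := by norm_num at hone ⊢; exact hone
      exact ⟨hone', fun h => absurd h (lt_irrefl 1)⟩
    · have hs1fus : Fusible (s - 1) := hαval ▸ hαfus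
      obtain ⟨x, y, hx, hy, hxy, hdef, hylim⟩ := killer hgt1 hs1fus
      have hsfus : Fusible s := by
        have := Fusible.fuse x y hx hy hxy
        rwa [← hdef] at this
      exact ⟨hsfus, fun _ => ⟨x, y, hx, hy, hxy, hdef, Or.inr hylim⟩⟩

/-! ### Closedness of the set of fusible numbers, and the main theorem -/

theorem fusible_no_strictAnti (g : ℕ → ℝ) (hg : ∀ n, Fusible (g n)) : ¬ StrictAnti g := by
  intro hanti
  exact (Set.isWF_iff_no_descending_seq.1 fusible_isPWO.isWF) g hanti (fun n => hg n)

theorem fusible_of_limit : ∀ s : ℝ, IsLimitFusible s → Fusible s := by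
  classical
  by_contra hbad
  push_neg at hbad
  set B : Set ℝ := {s | IsLimitFusible s ∧ ¬ Fusible s} with hB
  have hBne : B.Nonempty := by
    obtain ⟨s, hs1, hs2⟩ := hbad
    exact ⟨s, hs1, hs2⟩
  have hBWF : B.IsWF := by
    rw [Set.isWF_iff_no_descending_seq]
    intro f hf hmem
    -- choose fusibles interleaved between consecutive terms
    have key : ∀ n : ℕ, ∃ w, Fusible w ∧ f (n+1) < w ∧ w < f n := by
      intro n
      exact limit_exists_between (hmem n).1 (hf (Nat.lt_succ_self n))
    choose g hg1 hg2 hg3 using key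
    apply fusible_no_strictAnti g hg1
    apply strictAnti_nat_of_succ_lt
    intro n
    calc g (n+1) < f (n+1) := hg3 (n+1)
      _ < g n := hg2 n
  set s := hBWF.min hBne with hsdef
  have hsB : s ∈ B := hBWF.min_mem hBne
  have ih : ∀ σ : ℝ, σ < s → IsLimitFusible σ → Fusible σ := by
    intro σ hσs hσlim
    by_contra hσf
    exact hBWF.not_lt_min hBne (⟨hσlim, hσf⟩ : σ ∈ B) hσs
  exact hsB.2 (core hsB.1 ih).1

theorem limit_from_limit (z : ℝ) (hz : Fusible z) (hz1 : 1 < z) (hlim : IsLimitFusible z) :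
    ∃ x y : ℝ, Fusible x ∧ Fusible y ∧ |y - x| < 1 ∧ z = (x + y + 1) / 2 ∧
      (IsLimitFusible x ∨ IsLimitFusible y) := by
  exact (core hlim (fun σ _ h => fusible_of_limit σ h)).2 hz1
end
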